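/- Let G be a finite abelian group and G₀ ⊆ G non-half-factorial such that (a) there is g ∈ G₀ with Δ(G₀ \ {g}) = ∅, and (b) there is an atom U over G₀ with k(U) = 1 and gcd(v_g(U), ord(g)) = 1. Then every atom over G₀ has integer cross number, and min Δ(G₀) divides gcd{k(A) − 1 : A an atom over G₀ with k(A) > 1}. -/

import Mathlib

/-- A sequence over `G₀` (a multiset with entries in `G₀`) with sum zero. -/
def IsZeroSumSeq {G : Type*} [AddCommGroup G] (G₀ : Set G) (S : Multiset G) : Prop :=
  (∀ g ∈ S, g ∈ G₀) ∧ S.sum = 0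

/-- A minimal zero-sum sequence (atom) over `G₀`. -/
def IsAtomSeq {G : Type*} [AddCommGroup G] (G₀ : Set G) (A : Multiset G) : Prop :=
  IsZeroSumSeq G₀ A ∧ A ≠ 0 ∧ ∀ B ≤ A, B ≠ 0 → B.sum = 0 → B = A

/-- The set of lengths of factorizations of `B` into atoms over `G₀`. -/
def LengthSet {G : Type*} [AddCommGroup G] (G₀ : Set G) (B : Multiset G) : Set ℕ :=
  {k | ∃ F : Multiset (Multiset G), F.card = k ∧ (∀ A ∈ F, IsAtomSeq G₀ A) ∧ F.sum = B}

/-- The set of successive distances of a set of naturals. -/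
def DistSet (L : Set ℕ) : Set ℕ :=
  {d | ∃ a b, a ∈ L ∧ b ∈ L ∧ a < b ∧ b - a = d ∧ ∀ c ∈ L, ¬(a < c ∧ c < b)}

/-- The set of distances `Δ(G₀)`. -/
def DeltaSet {G : Type*} [AddCommGroup G] (G₀ : Set G) : Set ℕ :=
  {d | ∃ B : Multiset G, IsZeroSumSeq G₀ B ∧ d ∈ DistSet (LengthSet G₀ B)}

/-- The cross number of a sequence. -/
noncomputable def crossNum {G : Type*} [AddCommGroup G] (S : Multiset G) : ℚ :=
  (S.map (fun g => (1 : ℚ) / addOrderOf g)).sum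

/-- `G₀` is an LCN-set: every atom has cross number at least 1. -/
def IsLCNSet {G : Type*} [AddCommGroup G] (G₀ : Set G) : Prop :=
  ∀ A : Multiset G, IsAtomSeq G₀ A → 1 ≤ crossNum A

/-- The set of minimal distances `Δ*(G)`. -/
def DeltaStar (G : Type*) [AddCommGroup G] : Set ℕ :=
  {d | ∃ G₀ : Set G, DeltaSet G₀ ≠ ∅ ∧ d = sInf (DeltaSet G₀)}

/-- `m(G)`: the maximum of `min Δ(G₀)` over non-half-factorial LCN-sets `G₀`. -/
noncomputable def mConst (G : Type*) [AddCommGroup G] : ℕ :=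
  sSup {d | ∃ G₀ : Set G, IsLCNSet G₀ ∧ DeltaSet G₀ ≠ ∅ ∧ d = sInf (DeltaSet G₀)}

/-- The rank of a finite abelian group: the maximal `k` such that `(ZMod p)^k`
embeds into `G` for some prime `p`. -/
noncomputable def grank (G : Type*) [AddCommGroup G] : ℕ :=
  sSup {k | ∃ p : ℕ, p.Prime ∧ ∃ f : (Fin k → ZMod p) →+ G, Function.Injective f}

/-- The system of sets of lengths `L(G)`. -/
def SystemSets (G : Type*) [AddCommGroup G] : Set (Set ℕ) :=
  {L | ∃ B : Multiset G, B.sum = 0 ∧ L = LengthSet Set.univ B}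

/-- The Davenport constant: the maximal length of a minimal zero-sum sequence. -/
noncomputable def DavenportC (G : Type*) [AddCommGroup G] : ℕ :=
  sSup {k | ∃ A : Multiset G, IsAtomSeq (Set.univ : Set G) A ∧ A.card = k}


section NatAux

lemma aux_succ_pair : ∀ (N : ℕ) (S : Set ℕ) (a b : ℕ), b - a ≤ N → a ∈ S → b ∈ S → a < b →
    ∃ x y, x ∈ S ∧ y ∈ S ∧ a ≤ x ∧ x < y ∧ y ≤ b ∧ (y - x) ∈ DistSet S := by
  intro N
  induction N with
  | zero => intro S a b hN _ _ hab; omega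
  | succ N ih =>
    intro S a b hN ha hb hab
    by_cases hc : ∃ c, c ∈ S ∧ a < c ∧ c < b
    · obtain ⟨c, hcS, hac, hcb⟩ := hc
      obtain ⟨x, y, h1, h2, h3, h4, h5, h6⟩ := ih S a c (by omega) ha hcS hac
      exact ⟨x, y, h1, h2, h3, h4, by omega, h6⟩
    · push_neg at hc
      exact ⟨a, b, ha, hb, le_refl a, hab, le_refl b,
        ⟨a, b, ha, hb, hab, rfl, fun c hcS h => absurd (hc c hcS h.1) (by omega)⟩⟩

lemma aux_chain : ∀ (N : ℕ) (S : Set ℕ) (d : ℕ), (∀ e ∈ DistSet S, d ∣ e) →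
    ∀ a b, b - a ≤ N → a ∈ S → b ∈ S → a ≤ b → d ∣ b - a := by
  intro N
  induction N with
  | zero => intro S d h a b hN _ _ _; have : b - a = 0 := by omega
            simp [this]
  | succ N ih =>
    intro S d h a b hN ha hb hab
    rcases eq_or_lt_of_le hab with rfl | hlt
    · simp
    by_cases hc : ∃ c, c ∈ S ∧ a < c ∧ c < b
    · obtain ⟨c, hcS, hac, hcb⟩ := hc
      have h1 := ih S d h a c (by omega) ha hcS (le_of_lt hac)
      have h2 := ih S d h c b (by omega) hcS hb (le_of_lt hcb)
      have : b - a = (b - c) + (c - a) := by omega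
      rw [this]; exact dvd_add h2 h1
    · push_neg at hc
      exact h (b - a) ⟨a, b, ha, hb, hlt, rfl, fun c hcS hh => absurd (hc c hcS hh.1) (by omega)⟩

end NatAux

section CrossAux
variable {G : Type*} [AddCommGroup G]

lemma aux_crossNum_zero : crossNum (0 : Multiset G) = 0 := by simp [crossNum]

lemma aux_crossNum_add (S T : Multiset G) : crossNum (S + T) = crossNum S + crossNum T := by
  simp [crossNum]

lemma aux_crossNum_nsmul (n : ℕ) (S : Multiset G) : crossNum (n • S) = n * crossNum S := by
  induction n with
  | zero => simp [crossNum]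
  | succ n ih => rw [succ_nsmul, aux_crossNum_add, ih]; push_cast; ring

lemma aux_crossNum_replicate (n : ℕ) (x : G) :
    crossNum (Multiset.replicate n x) = n * (1 / (addOrderOf x : ℚ)) := by
  simp [crossNum, Multiset.map_replicate, Multiset.sum_replicate, nsmul_eq_mul]

lemma aux_crossNum_sum (F : Multiset (Multiset G)) :
    crossNum F.sum = (F.map crossNum).sum := by
  induction F using Multiset.induction with
  | empty => simp [crossNum]
  | cons A F ih => simp [aux_crossNum_add, ih]

lemma aux_sum_nsmul (n : ℕ) (S : Multiset G) : (n • S).sum = n • S.sum := by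
  induction n with
  | zero => simp
  | succ n ih => rw [succ_nsmul, succ_nsmul, Multiset.sum_add, ih]

lemma aux_crossNum_pos [Finite G] (S : Multiset G) (hS : S ≠ 0) : 0 < crossNum S := by
  obtain ⟨x, hx⟩ := Multiset.exists_mem_of_ne_zero hS
  obtain ⟨T, rfl⟩ := Multiset.exists_cons_of_mem hx
  rw [show x ::ₘ T = {x} + T from rfl, aux_crossNum_add]
  have h1 : 0 < (1 : ℚ) / (addOrderOf x : ℚ) := by
    apply div_pos one_pos
    exact_mod_cast addOrderOf_pos x
  have h2 : 0 ≤ crossNum T := by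
    apply Multiset.sum_nonneg
    intro q hq
    obtain ⟨y, _, rfl⟩ := Multiset.mem_map.1 hq
    positivity
  have : crossNum {x} = 1 / (addOrderOf x : ℚ) := by simp [crossNum]
  rw [this]; linarith

end CrossAux


section A2
variable {G : Type*} [AddCommGroup G]

lemma aux_zsum_add {G₀ : Set G} {B C : Multiset G} (hB : IsZeroSumSeq G₀ B)
    (hC : IsZeroSumSeq G₀ C) : IsZeroSumSeq G₀ (B + C) := by
  refine ⟨fun x hx => ?_, by rw [Multiset.sum_add, hB.2, hC.2, add_zero]⟩
  rcases Multiset.mem_add.1 hx with h | h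
  exacts [hB.1 x h, hC.1 x h]

lemma aux_zsum_nsmul {G₀ : Set G} {C : Multiset G} (hC : IsZeroSumSeq G₀ C) (q : ℕ) :
    IsZeroSumSeq G₀ (q • C) := by
  induction q with
  | zero => exact ⟨by simp, by simp⟩
  | succ q ih => rw [succ_nsmul]; exact aux_zsum_add ih hC

lemma aux_atom_mono {G₀ G₁ : Set G} (h : G₀ ⊆ G₁) {A : Multiset G} (hA : IsAtomSeq G₀ A) :
    IsAtomSeq G₁ A :=
  ⟨⟨fun x hx => h (hA.1.1 x hx), hA.1.2⟩, hA.2⟩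

lemma aux_replicate_atom [Finite G] {G₀ : Set G} {x : G} (hx : x ∈ G₀) :
    IsAtomSeq G₀ (Multiset.replicate (addOrderOf x) x) := by
  have hpos : 0 < addOrderOf x := addOrderOf_pos x
  refine ⟨⟨fun y hy => ?_, ?_⟩, ?_, ?_⟩
  · rw [Multiset.eq_of_mem_replicate hy]; exact hx
  · rw [Multiset.sum_replicate]; exact addOrderOf_nsmul_eq_zero x
  · intro h
    have := congrArg Multiset.card h
    simp only [Multiset.card_replicate, Multiset.card_zero] at this; omega
  · intro B hB hB0 hBs
    obtain ⟨m, hm, rfl⟩ := Multiset.le_replicate_iff.1 hB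
    have hm0 : m ≠ 0 := fun h => hB0 (by simp [h])
    have hsum : (m • x = 0) := by rwa [Multiset.sum_replicate] at hBs
    have hdvd : addOrderOf x ∣ m := addOrderOf_dvd_of_nsmul_eq_zero hsum
    have hge : addOrderOf x ≤ m := Nat.le_of_dvd (Nat.pos_of_ne_zero hm0) hdvd
    have : m = addOrderOf x := le_antisymm hm hge
    rw [this]

lemma aux_exists_atom {G₀ : Set G} {B : Multiset G} (hB : IsZeroSumSeq G₀ B) (hB0 : B ≠ 0) :
    ∃ A, IsAtomSeq G₀ A ∧ A ≤ B := by
  set T : Set ℕ := {k | ∃ C : Multiset G, (C ≤ B ∧ C ≠ 0 ∧ C.sum = 0) ∧ Multiset.card C = k} with hT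
  have hTne : T.Nonempty := ⟨Multiset.card B, B, ⟨le_rfl, hB0, hB.2⟩, rfl⟩
  obtain ⟨C, ⟨hCB, hC0, hCs⟩, hCc⟩ := Nat.sInf_mem hTne
  refine ⟨C, ⟨⟨fun x hx => hB.1 x (Multiset.mem_of_le hCB hx), hCs⟩, hC0, ?_⟩, hCB⟩
  intro D hDC hD0 hDs
  have hle : sInf T ≤ Multiset.card D := Nat.sInf_le ⟨D, ⟨hDC.trans hCB, hD0, hDs⟩, rfl⟩
  exact Multiset.eq_of_le_of_card_le hDC (by omega)

lemma aux_exists_fact [DecidableEq G] {G₀ : Set G} : ∀ (N : ℕ) (B : Multiset G), Multiset.card B ≤ N →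
    IsZeroSumSeq G₀ B →
    ∃ F : Multiset (Multiset G), (∀ A ∈ F, IsAtomSeq G₀ A) ∧ F.sum = B := by
  intro N
  induction N with
  | zero =>
    intro B hBc _
    have : B = 0 := by
      rw [← Multiset.card_eq_zero]; omega
    exact ⟨0, by simp, by simp [this]⟩
  | succ N ih =>
    intro B hBc hB
    by_cases hB0 : B = 0
    · exact ⟨0, by simp, by simp [hB0]⟩
    · obtain ⟨A, hA, hAB⟩ := aux_exists_atom hB hB0
      have hAcard : 0 < Multiset.card A := Multiset.card_pos.2 hA.2.1
      have hBA : (B - A) + A = B := tsub_add_cancel_of_le hAB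
      have hsub : IsZeroSumSeq G₀ (B - A) := by
        refine ⟨fun x hx => hB.1 x (Multiset.mem_of_le (tsub_le_self : B - A ≤ B) hx), ?_⟩
        have := congrArg Multiset.sum hBA
        rw [Multiset.sum_add, hA.1.2, add_zero] at this
        rw [this, hB.2]
      have hcs : Multiset.card (B - A) ≤ N := by
        have := congrArg Multiset.card hBA
        rw [Multiset.card_add] at this
        omega
      obtain ⟨F, hF1, hF2⟩ := ih (B - A) hcs hsub
      exact ⟨A ::ₘ F, fun X hX => by
        rcases Multiset.mem_cons.1 hX with rfl | h
        exacts [hA, hF1 X h], by rw [Multiset.sum_cons, hF2, add_comm, hBA]⟩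

lemma aux_len_add {G₀ : Set G} {B C : Multiset G} {a b : ℕ}
    (ha : a ∈ LengthSet G₀ B) (hb : b ∈ LengthSet G₀ C) : a + b ∈ LengthSet G₀ (B + C) := by
  obtain ⟨F, hF1, hF2, hF3⟩ := ha
  obtain ⟨E, hE1, hE2, hE3⟩ := hb
  refine ⟨F + E, by simp [hF1, hE1], fun A hA => ?_, by rw [Multiset.sum_add, hF3, hE3]⟩
  rcases Multiset.mem_add.1 hA with h | h
  exacts [hF2 A h, hE2 A h]

lemma aux_len_nsmul {G₀ : Set G} {C : Multiset G} {a : ℕ} (ha : a ∈ LengthSet G₀ C) (q : ℕ) :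
    q * a ∈ LengthSet G₀ (q • C) := by
  induction q with
  | zero => exact ⟨0, by simp, by simp, by simp⟩
  | succ q ih =>
    have := aux_len_add ih ha
    rw [succ_nsmul]
    convert this using 1
    ring

end A2



section HF
variable {G : Type*} [AddCommGroup G]

lemma aux_msum_sum {ι M : Type*} [AddCommMonoid M] (s : Finset ι) (f : ι → Multiset M) :
    (∑ i ∈ s, f i).sum = ∑ i ∈ s, (f i).sum := by
  classical
  induction s using Finset.induction with
  | empty => simp
  | insert _ _ h ih => rw [Finset.sum_insert h, Finset.sum_insert h, Multiset.sum_add, ih]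

lemma aux_mcard_sum {ι M : Type*} (s : Finset ι) (f : ι → Multiset M) :
    Multiset.card (∑ i ∈ s, f i) = ∑ i ∈ s, Multiset.card (f i) := by
  classical
  induction s using Finset.induction with
  | empty => simp
  | insert _ _ h ih => rw [Finset.sum_insert h, Finset.sum_insert h, Multiset.card_add, ih]

lemma aux_crossNum_finsum {ι : Type*} (s : Finset ι) (f : ι → Multiset G) :
    crossNum (∑ i ∈ s, f i) = ∑ i ∈ s, crossNum (f i) := by
  classical
  induction s using Finset.induction with
  | empty => simp [crossNum]
  | insert _ _ h ih => rw [Finset.sum_insert h, Finset.sum_insert h, aux_crossNum_add, ih]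

variable [Fintype G] [DecidableEq G]

/-- Zaks–Skula: if `Δ(G₀) = ∅` then every atom over `G₀` has cross number 1. -/
lemma aux_hf_atom {G₀ : Set G} (hhf : DeltaSet G₀ = ∅)
    {A : Multiset G} (hA : IsAtomSeq G₀ A) : crossNum A = 1 := by
  set n₀ := Fintype.card G with hn₀
  have hn₀pos : 0 < n₀ := Fintype.card_pos
  set c : G → ℕ := fun x => (n₀ / addOrderOf x) * A.count x with hc
  -- the two factorizations of n₀ • A
  have hord : ∀ x : G, addOrderOf x ∣ n₀ := fun x => addOrderOf_dvd_card
  have hordpos : ∀ x : G, 0 < addOrderOf x := fun x => addOrderOf_pos x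
  have hcx : ∀ x : G, c x * addOrderOf x = n₀ * A.count x := by
    intro x
    simp only [hc]
    rw [mul_right_comm, Nat.div_mul_cancel (hord x)]
  set F2 : Multiset (Multiset G) :=
    ∑ x ∈ A.toFinset, Multiset.replicate (c x) (Multiset.replicate (addOrderOf x) x) with hF2
  have hF2sum : F2.sum = n₀ • A := by
    rw [hF2, aux_msum_sum]
    have : ∀ x ∈ A.toFinset,
        (Multiset.replicate (c x) (Multiset.replicate (addOrderOf x) x)).sum
          = n₀ • (A.count x • ({x} : Multiset G)) := by
      intro x _
      rw [Multiset.sum_replicate, Multiset.nsmul_replicate, hcx x, ← Multiset.nsmul_replicate,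
        Multiset.nsmul_singleton]
    rw [Finset.sum_congr rfl this, ← Finset.smul_sum, Multiset.toFinset_sum_count_nsmul_eq]
  have hF2card : Multiset.card F2 = ∑ x ∈ A.toFinset, c x := by
    rw [hF2, aux_mcard_sum]
    simp
  have hF2atoms : ∀ X ∈ F2, IsAtomSeq G₀ X := by
    intro X hX
    rw [hF2] at hX
    obtain ⟨x, hxA, hXx⟩ := Multiset.mem_sum.1 hX
    rw [Multiset.eq_of_mem_replicate hXx]
    exact aux_replicate_atom (hA.1.1 x (Multiset.mem_toFinset.1 hxA))
  have hzsum : IsZeroSumSeq G₀ (n₀ • A) := aux_zsum_nsmul hA.1 n₀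
  have hK : ((∑ x ∈ A.toFinset, c x : ℕ) : ℚ) = n₀ * crossNum A := by
    have hArw : crossNum A = ∑ x ∈ A.toFinset, (A.count x : ℚ) * (1 / (addOrderOf x : ℚ)) := by
      conv_lhs => rw [← Multiset.toFinset_sum_count_nsmul_eq A]
      rw [aux_crossNum_finsum]
      refine Finset.sum_congr rfl fun x _ => ?_
      rw [Multiset.nsmul_singleton, aux_crossNum_replicate]
    rw [hArw, Nat.cast_sum, Finset.mul_sum]
    refine Finset.sum_congr rfl fun x _ => ?_
    have hne : (addOrderOf x : ℚ) ≠ 0 := by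
      exact_mod_cast (hordpos x).ne'
    have := hcx x
    have hcast : (c x : ℚ) * (addOrderOf x : ℚ) = (n₀ : ℚ) * (A.count x : ℚ) := by
      exact_mod_cast congrArg (Nat.cast : ℕ → ℚ) this
    field_simp at hcast ⊢
    linarith [hcast]
  -- two lengths
  have hlen1 : n₀ ∈ LengthSet G₀ (n₀ • A) := by
    refine ⟨Multiset.replicate n₀ A, by simp, fun X hX => ?_, ?_⟩
    · rw [Multiset.eq_of_mem_replicate hX]; exact hA
    · rw [Multiset.sum_replicate]
  have hlen2 : (∑ x ∈ A.toFinset, c x) ∈ LengthSet G₀ (n₀ • A) := by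
    exact ⟨F2, hF2card, hF2atoms, hF2sum⟩
  -- conclude
  by_contra hne1
  have hKne : (∑ x ∈ A.toFinset, c x) ≠ n₀ := by
    intro h
    rw [h] at hK
    have hn0 : (n₀ : ℚ) ≠ 0 := by exact_mod_cast hn₀pos.ne'
    apply hne1
    have : (n₀ : ℚ) * 1 = (n₀ : ℚ) * crossNum A := by rw [mul_one]; exact hK
    exact (mul_left_cancel₀ hn0 this).symm
  rcases Nat.lt_or_ge (∑ x ∈ A.toFinset, c x) n₀ with hlt | hge
  · obtain ⟨x, y, hx, hy, _, _, _, hd⟩ :=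
      aux_succ_pair (n₀ - (∑ x ∈ A.toFinset, c x)) _ _ _ le_rfl hlen2 hlen1 hlt
    exact absurd hhf (by
      apply Set.nonempty_iff_ne_empty.1
      exact ⟨y - x, ⟨n₀ • A, hzsum, hd⟩⟩)
  · have hlt : n₀ < ∑ x ∈ A.toFinset, c x := lt_of_le_of_ne hge (Ne.symm hKne)
    obtain ⟨x, y, hx, hy, _, _, _, hd⟩ :=
      aux_succ_pair ((∑ x ∈ A.toFinset, c x) - n₀) _ _ _ le_rfl hlen1 hlen2 hlt
    exact absurd hhf (by
      apply Set.nonempty_iff_ne_empty.1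
      exact ⟨y - x, ⟨n₀ • A, hzsum, hd⟩⟩)

/-- In a half-factorial set, every factorization length equals the cross number. -/
lemma aux_hf_length {G₀ : Set G} (hhf : DeltaSet G₀ = ∅)
    {B : Multiset G} {k : ℕ} (hk : k ∈ LengthSet G₀ B) : (k : ℚ) = crossNum B := by
  obtain ⟨F, hFc, hFa, hFs⟩ := hk
  rw [← hFs, aux_crossNum_sum]
  have : F.map crossNum = Multiset.replicate k 1 := by
    rw [Multiset.eq_replicate]
    constructor
    · rw [Multiset.card_map, hFc]
    · intro q hq
      obtain ⟨X, hX, rfl⟩ := Multiset.mem_map.1 hq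
      exact aux_hf_atom hhf (hFa X hX)
  rw [this, Multiset.sum_replicate, nsmul_eq_mul, mul_one]

end HF


section L3
variable {G : Type*} [AddCommGroup G]

lemma aux_sInf_dvd {G₀ : Set G} (hne : DeltaSet G₀ ≠ ∅) {e : ℕ} (he : e ∈ DeltaSet G₀) :
    sInf (DeltaSet G₀) ∣ e := by
  have hnon : (DeltaSet G₀).Nonempty := Set.nonempty_iff_ne_empty.2 hne
  set d := sInf (DeltaSet G₀) with hd
  have hdmem : d ∈ DeltaSet G₀ := Nat.sInf_mem hnon
  obtain ⟨C, hC, a', b', ha', hb', hab', hd', -⟩ := hdmem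
  obtain ⟨B, hB, a, b, ha, hb, hab, he', -⟩ := he
  have hdpos : 0 < d := by omega
  set q := e / d with hq
  set r := e % d with hr
  have hmod : d * q + r = e := Nat.div_add_mod e d
  have hrd : r < d := Nat.mod_lt _ hdpos
  by_cases hr0 : r = 0
  · exact Nat.dvd_of_mod_eq_zero hr0
  exfalso
  have hx0 : a + q * b' ∈ LengthSet G₀ (B + q • C) := aux_len_add ha (aux_len_nsmul hb' q)
  have hy0 : b + q * a' ∈ LengthSet G₀ (B + q • C) := aux_len_add hb (aux_len_nsmul ha' q)
  have hqb : q * b' = q * a' + q * d := by rw [show b' = a' + d by omega, mul_add]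
  have hqd : e = d * q + r := hmod.symm
  have hcomm : d * q = q * d := mul_comm d q
  have hlt : a + q * b' < b + q * a' := by
    have : b = a + e := by omega
    omega
  obtain ⟨x, y, hx, hy, hxl, hxy, hyl, hDist⟩ :=
    aux_succ_pair ((b + q * a') - (a + q * b')) _ _ _ le_rfl hx0 hy0 hlt
  have hyx : y - x ∈ DeltaSet G₀ := ⟨B + q • C, aux_zsum_add hB (aux_zsum_nsmul hC q), hDist⟩
  have h1 : d ≤ y - x := Nat.sInf_le hyx
  omega

end L3

section Master
variable {G : Type*} [AddCommGroup G] [Fintype G] [DecidableEq G]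

lemma aux_master {G₀ : Set G}
    {g : G} (hg : g ∈ G₀) (hhf : DeltaSet (G₀ \ {g}) = ∅)
    {U : Multiset G} (hU : IsAtomSeq G₀ U) (hkU : crossNum U = 1)
    (hgcd : Nat.gcd (U.count g) (addOrderOf g) = 1)
    {A : Multiset G} (hA : IsAtomSeq G₀ A) :
    ∃ (m t : ℕ) (W : Multiset G), crossNum A = m ∧ IsZeroSumSeq G₀ W ∧
      (1 + t) ∈ LengthSet G₀ W ∧ (m + t) ∈ LengthSet G₀ W := by
  set n := addOrderOf g with hn
  have hnpos : 0 < n := addOrderOf_pos g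
  have hnz : NeZero n := ⟨hnpos.ne'⟩
  set u := U.count g with hu
  set a := A.count g with ha
  -- choose t with n ∣ a + t * u
  have hinv : (u : ZMod n) * (u : ZMod n)⁻¹ = 1 := ZMod.coe_mul_inv_eq_one u hgcd
  set t : ℕ := ((-(a : ZMod n)) * (u : ZMod n)⁻¹).val with htdef
  have ht : n ∣ a + t * u := by
    rw [← ZMod.natCast_eq_zero_iff]
    push_cast
    have hcast : ((t : ℕ) : ZMod n) = (-(a : ZMod n)) * (u : ZMod n)⁻¹ :=
      ZMod.natCast_rightInverse _
    rw [hcast]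
    calc (a : ZMod n) + (-(a : ZMod n)) * (u : ZMod n)⁻¹ * (u : ZMod n)
        = (a : ZMod n) + -((a : ZMod n)) * ((u : ZMod n) * (u : ZMod n)⁻¹) := by ring
      _ = 0 := by rw [hinv]; ring
  obtain ⟨s, hs⟩ := ht
  set W := A + t • U with hW
  have hWz : IsZeroSumSeq G₀ W := aux_zsum_add hA.1 (aux_zsum_nsmul hU.1 t)
  have hcount : W.count g = a + t * u := by
    rw [hW, Multiset.count_add, Multiset.count_nsmul, ha, hu]
  set W'' := W.filter (· ≠ g) with hWpp
  have hsplit : W = W'' + Multiset.replicate (a + t * u) g := by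
    have h1 := Multiset.filter_add_not (fun x => x ≠ g) W
    have h2 : W.filter (fun x => ¬ x ≠ g) = W.filter (fun x => x = g) :=
      Multiset.filter_congr (fun x _ => by simp)
    rw [h2, Multiset.filter_eq', hcount] at h1
    exact h1.symm
  have hrepl_sum : (Multiset.replicate (a + t * u) g).sum = 0 := by
    rw [Multiset.sum_replicate, hs, mul_comm, mul_smul, hn, addOrderOf_nsmul_eq_zero, smul_zero]
  have hWppz : IsZeroSumSeq (G₀ \ {g}) W'' := by
    constructor
    · intro x hx
      have := Multiset.mem_filter.1 hx
      exact ⟨hWz.1 x this.1, this.2⟩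
    · have := congrArg Multiset.sum hsplit
      rw [hWz.2, Multiset.sum_add, hrepl_sum, add_zero] at this
      exact this.symm
  obtain ⟨F, hF1, hF2⟩ := aux_exists_fact (Multiset.card W'') W'' le_rfl hWppz
  set k := Multiset.card F with hk
  have hkW : (k : ℚ) = crossNum W'' := aux_hf_length hhf ⟨F, rfl, hF1, hF2⟩
  -- cross number computations
  have hnQ : ((n : ℚ)) ≠ 0 := by exact_mod_cast hnpos.ne'
  have hc1 : crossNum W = crossNum A + t := by
    rw [hW, aux_crossNum_add, aux_crossNum_nsmul, hkU, mul_one]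
  have hc2 : crossNum W = (k : ℚ) + s := by
    rw [hsplit, aux_crossNum_add, aux_crossNum_replicate, hkW]
    congr 1
    rw [hs]
    push_cast
    field_simp
    rw [← hn, mul_div_cancel_left₀ _ hnQ]
  have hApos : 0 < crossNum A := aux_crossNum_pos A hA.2.1
  have hts : t < k + s := by
    have : (t : ℚ) < (k : ℚ) + s := by
      have : crossNum A = (k : ℚ) + s - t := by linarith [hc1, hc2]
      linarith
    exact_mod_cast this
  set m := k + s - t with hm
  have hmQ : crossNum A = (m : ℚ) := by
    have h1 : crossNum A = (k : ℚ) + s - t := by linarith [hc1, hc2]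
    rw [h1, hm]
    push_cast [Nat.cast_sub (le_of_lt hts)]
    ring
  refine ⟨m, t, W, hmQ, hWz, ?_, ?_⟩
  · refine ⟨A ::ₘ Multiset.replicate t U, by simp [add_comm], fun X hX => ?_, ?_⟩
    · rcases Multiset.mem_cons.1 hX with rfl | h
      · exact hA
      · rw [Multiset.eq_of_mem_replicate h]; exact hU
    · rw [Multiset.sum_cons, Multiset.sum_replicate, hW]
  · refine ⟨F + Multiset.replicate s (Multiset.replicate n g), ?_, fun X hX => ?_, ?_⟩
    · simp only [Multiset.card_add, Multiset.card_replicate, ← hk]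
      omega
    · rcases Multiset.mem_add.1 hX with h | h
      · exact aux_atom_mono Set.diff_subset (hF1 X h)
      · rw [Multiset.eq_of_mem_replicate h]
        exact aux_replicate_atom hg
    · rw [Multiset.sum_add, hF2, Multiset.sum_replicate, Multiset.nsmul_replicate,
        mul_comm s n, ← hs]
      exact hsplit.symm

end Master

theorem stmt_10 {G : Type*} [AddCommGroup G] [Fintype G] [DecidableEq G] (G₀ : Set G)
    (hnhf : DeltaSet G₀ ≠ ∅)
    (g : G) (hg : g ∈ G₀) (hhf : DeltaSet (G₀ \ {g}) = ∅)
    (U : Multiset G) (hU : IsAtomSeq G₀ U) (hkU : crossNum U = 1)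
    (hgcd : Nat.gcd (U.count g) (addOrderOf g) = 1) :
    (∀ A : Multiset G, IsAtomSeq G₀ A → ∃ m : ℕ, crossNum A = m) ∧
    (∀ A : Multiset G, IsAtomSeq G₀ A → ∀ m : ℕ, crossNum A = (m : ℚ) → 1 < m →
      sInf (DeltaSet G₀) ∣ m - 1) := by
  constructor
  · intro A hA
    obtain ⟨m, t, W, hm, -⟩ := aux_master hg hhf hU hkU hgcd hA
    exact ⟨m, hm⟩
  · intro A hA m hm h1m
    obtain ⟨m', t, W, hm', hWz, hl1, hl2⟩ := aux_master hg hhf hU hkU hgcd hA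
    have hmm : m = m' := by
      have : (m : ℚ) = (m' : ℚ) := by rw [← hm, ← hm']
      exact_mod_cast this
    subst hmm
    have hdvd : ∀ e ∈ DistSet (LengthSet G₀ W), sInf (DeltaSet G₀) ∣ e :=
      fun e heD => aux_sInf_dvd hnhf ⟨W, hWz, heD⟩
    have hchain := aux_chain ((m + t) - (1 + t)) _ _ hdvd (1 + t) (m + t) le_rfl hl1 hl2
      (by omega)
    have heq : (m + t) - (1 + t) = m - 1 := by omega
    rwa [heq] at hchain
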